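/- Let a_1 ≤ a_2 be reals, K = [a_1,a_2], φ(t) = (t, t²), L = φ(K) ⊆ ℝ², and Λ = convexHull(L). Let c = (c_1,c_2) and q = (q_1,q_2) be vectors in ℝ² such that one of the following holds: (1) q_1 + q_2(a_1+a_2) = 0 and c_1 q_2 − c_2 q_1 ≠ 0; or (2) (q_1 + q_2(a_1+a_2)) · (c_1 q_2 − c_2 q_1) < 0. Then for every ξ ∈ ℝ such that the set S_ξ = {m ∈ Λ : q·m = ξ} is nonempty, every point of S_ξ at which m ↦ c·m attains its minimum over S_ξ belongs to L. -/

import Mathlib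

lemma hull_subset_aux (a1 a2 : ℝ) :
    convexHull ℝ ((fun t : ℝ => (t, t ^ 2)) '' Set.Icc a1 a2) ⊆
      {p : ℝ × ℝ | a1 ≤ p.1 ∧ p.1 ≤ a2 ∧ p.1 ^ 2 ≤ p.2 ∧ p.2 ≤ (a1 + a2) * p.1 - a1 * a2} := by
  apply convexHull_min
  · rintro p ⟨t, ⟨ht1, ht2⟩, rfl⟩
    exact ⟨ht1, ht2, le_refl _, by simp only; nlinarith⟩
  · rintro p ⟨hp1, hp2, hp3, hp4⟩ q ⟨hq1, hq2, hq3, hq4⟩ u v hu hv huv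
    have e1 : (u • p + v • q).1 = u * p.1 + v * q.1 := by simp [smul_eq_mul]
    have e2 : (u • p + v • q).2 = u * p.2 + v * q.2 := by simp [smul_eq_mul]
    have k1 := mul_le_mul_of_nonneg_left hp1 hu
    have k2 := mul_le_mul_of_nonneg_left hq1 hv
    have k3 := mul_le_mul_of_nonneg_left hp2 hu
    have k4 := mul_le_mul_of_nonneg_left hq2 hv
    have k5 := mul_le_mul_of_nonneg_left hp3 hu
    have k6 := mul_le_mul_of_nonneg_left hq3 hv
    have k7 := mul_le_mul_of_nonneg_left hp4 hu
    have k8 := mul_le_mul_of_nonneg_left hq4 hv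
    have w1 : u * a1 + v * a1 = a1 := by rw [← add_mul, huv, one_mul]
    have w2 : u * a2 + v * a2 = a2 := by rw [← add_mul, huv, one_mul]
    have w3 : u * (a1 * a2) + v * (a1 * a2) = a1 * a2 := by rw [← add_mul, huv, one_mul]
    refine ⟨?_, ?_, ?_, ?_⟩
    · rw [e1]; linarith
    · rw [e1]; linarith
    · rw [e1, e2]; nlinarith [mul_nonneg (mul_nonneg hu hv) (sq_nonneg (p.1 - q.1))]
    · rw [e1, e2]; nlinarith [k7, k8, w3]

lemma mem_hull_aux (a1 a2 x y : ℝ) (ha : a1 ≤ a2)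
    (h1 : a1 ≤ x) (h2 : x ≤ a2) (h3 : x ^ 2 ≤ y) (h4 : y ≤ (a1 + a2) * x - a1 * a2) :
    (x, y) ∈ convexHull ℝ ((fun t : ℝ => (t, t ^ 2)) '' Set.Icc a1 a2) := by
  set H := convexHull ℝ ((fun t : ℝ => (t, t ^ 2)) '' Set.Icc a1 a2) with hH
  have hconv : Convex ℝ H := convex_convexHull ℝ _
  have hmem : ∀ t, a1 ≤ t → t ≤ a2 → ((t, t ^ 2) : ℝ × ℝ) ∈ H :=
    fun t u v => subset_convexHull ℝ _ ⟨t, ⟨u, v⟩, rfl⟩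
  have hP : ((x, x ^ 2) : ℝ × ℝ) ∈ H := hmem x h1 h2
  rcases eq_or_lt_of_le ha with heq | hlt
  · -- a1 = a2, then x = a1 and y = x^2
    have hx : x = a1 := le_antisymm (heq ▸ h2) h1
    have hy : y = x ^ 2 := by subst hx; nlinarith
    rw [hy]; exact hP
  · have hA : ((a1, a1 ^ 2) : ℝ × ℝ) ∈ H := hmem a1 le_rfl ha
    have hB : ((a2, a2 ^ 2) : ℝ × ℝ) ∈ H := hmem a2 ha le_rfl
    have hd : (0:ℝ) < a2 - a1 := by linarith
    have hC : ((x, (a1 + a2) * x - a1 * a2) : ℝ × ℝ) ∈ H := by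
      have hu : (0:ℝ) ≤ (a2 - x) / (a2 - a1) := by apply div_nonneg <;> linarith
      have hv : (0:ℝ) ≤ (x - a1) / (a2 - a1) := by
        apply div_nonneg <;> linarith
      have huv : (a2 - x) / (a2 - a1) + (x - a1) / (a2 - a1) = 1 := by
        field_simp
        ring
      have := hconv hA hB hu hv huv
      convert this using 1
      have e1 : (((a2 - x) / (a2 - a1)) • ((a1, a1 ^ 2) : ℝ × ℝ)
          + ((x - a1) / (a2 - a1)) • ((a2, a2 ^ 2) : ℝ × ℝ))
          = (((a2 - x) / (a2 - a1)) * a1 + ((x - a1) / (a2 - a1)) * a2,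
             ((a2 - x) / (a2 - a1)) * a1 ^ 2 + ((x - a1) / (a2 - a1)) * a2 ^ 2) := by
        simp [Prod.ext_iff, smul_eq_mul]
      rw [e1, Prod.ext_iff]
      constructor <;> simp only <;> field_simp <;> ring
    by_cases hc : (a1 + a2) * x - a1 * a2 = x ^ 2
    · have hy : y = x ^ 2 := by nlinarith
      rw [hy]; exact hP
    · have hgap : (0:ℝ) < (a1 + a2) * x - a1 * a2 - x ^ 2 := by
        rcases lt_or_eq_of_le (by nlinarith : x ^ 2 ≤ (a1 + a2) * x - a1 * a2) with h | h
        · linarith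
        · exact absurd h.symm hc
      set g : ℝ := (a1 + a2) * x - a1 * a2 with hg
      have hu : (0:ℝ) ≤ (g - y) / (g - x ^ 2) := by
        apply div_nonneg <;> linarith
      have hv : (0:ℝ) ≤ (y - x ^ 2) / (g - x ^ 2) := by
        apply div_nonneg <;> linarith
      have huv : (g - y) / (g - x ^ 2) + (y - x ^ 2) / (g - x ^ 2) = 1 := by
        field_simp
        ring
      have := hconv hP hC hu hv huv
      convert this using 1
      have e1 : (((g - y) / (g - x ^ 2)) • ((x, x ^ 2) : ℝ × ℝ)
          + ((y - x ^ 2) / (g - x ^ 2)) • ((x, g) : ℝ × ℝ))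
          = (((g - y) / (g - x ^ 2)) * x + ((y - x ^ 2) / (g - x ^ 2)) * x,
             ((g - y) / (g - x ^ 2)) * x ^ 2 + ((y - x ^ 2) / (g - x ^ 2)) * g) := by
        simp [Prod.ext_iff, smul_eq_mul]
      rw [e1, Prod.ext_iff]
      have hne : g - x ^ 2 ≠ 0 := by linarith
      constructor <;> simp only <;> field_simp <;> ring

theorem stmt_7
    (a1 a2 : ℝ) (ha : a1 ≤ a2)
    (φ : ℝ → ℝ × ℝ) (hφ : φ = fun t => (t, t ^ 2))
    (c1 c2 q1 q2 : ℝ)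
    (hcases : (q1 + q2 * (a1 + a2) = 0 ∧ c1 * q2 - c2 * q1 ≠ 0) ∨
      ((q1 + q2 * (a1 + a2)) * (c1 * q2 - c2 * q1) < 0)) :
    ∀ ξ : ℝ,
      ({mm ∈ convexHull ℝ (φ '' Set.Icc a1 a2) | q1 * mm.1 + q2 * mm.2 = ξ}).Nonempty →
      ∀ m0 ∈ {mm ∈ convexHull ℝ (φ '' Set.Icc a1 a2) | q1 * mm.1 + q2 * mm.2 = ξ},
        (∀ m' ∈ {mm ∈ convexHull ℝ (φ '' Set.Icc a1 a2) | q1 * mm.1 + q2 * mm.2 = ξ},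
          c1 * m0.1 + c2 * m0.2 ≤ c1 * m'.1 + c2 * m'.2) →
        m0 ∈ φ '' Set.Icc a1 a2 := by
  subst hφ
  intro ξ hne m0 hm0 hmin
  obtain ⟨hΛ, hline⟩ := hm0
  obtain ⟨hx1, hx2, hx3, hx4⟩ := hull_subset_aux a1 a2 hΛ
  rcases eq_or_lt_of_le hx3 with hflat | hstrict
  · exact ⟨m0.1, ⟨hx1, hx2⟩, by simp only; rw [Prod.ext_iff]; exact ⟨rfl, hflat⟩⟩
  exfalso
  have hxa1 : a1 < m0.1 := by nlinarith
  have hxa2 : m0.1 < a2 := by nlinarith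
  have hD : c1 * q2 - c2 * q1 ≠ 0 := by
    rcases hcases with ⟨_, h⟩ | h
    · exact h
    · intro h0; rw [h0, mul_zero] at h; exact lt_irrefl 0 h
  have hQD : (q1 + q2 * (a1 + a2)) * (c1 * q2 - c2 * q1) ≤ 0 := by
    rcases hcases with ⟨h, _⟩ | h
    · rw [h, zero_mul]
    · exact le_of_lt h
  obtain ⟨D, hDdef⟩ : ∃ D : ℝ, D = c1 * q2 - c2 * q1 := ⟨_, rfl⟩
  rw [← hDdef] at hD hQD
  obtain ⟨ε, hε, hε1, hεK2, hεa1, hεa2⟩ :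
      ∃ ε : ℝ, 0 < ε ∧ ε ≤ 1 ∧
        ε * (|D * q2| ^ 2 + |2 * m0.1 * (D * q2) + D * q1| + 1) ≤ m0.2 - m0.1 ^ 2 ∧
        ε * (|D * q2| + 1) ≤ m0.1 - a1 ∧
        ε * (|D * q2| + 1) ≤ a2 - m0.1 := by
    have hK1 : (0:ℝ) < |D * q2| + 1 := by positivity
    have hK2 : (0:ℝ) < |D * q2| ^ 2 + |2 * m0.1 * (D * q2) + D * q1| + 1 := by positivity
    refine ⟨min 1 (min ((m0.2 - m0.1 ^ 2) / (|D * q2| ^ 2 + |2 * m0.1 * (D * q2) + D * q1| + 1))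
      (min ((m0.1 - a1) / (|D * q2| + 1)) ((a2 - m0.1) / (|D * q2| + 1)))), ?_, ?_, ?_, ?_, ?_⟩
    · exact lt_min one_pos (lt_min (div_pos (by linarith) hK2)
        (lt_min (div_pos (by linarith) hK1) (div_pos (by linarith) hK1)))
    · exact min_le_left _ _
    · have h1 : min 1 (min ((m0.2 - m0.1 ^ 2) / (|D * q2| ^ 2 + |2 * m0.1 * (D * q2) + D * q1| + 1))
        (min ((m0.1 - a1) / (|D * q2| + 1)) ((a2 - m0.1) / (|D * q2| + 1)))) ≤
          (m0.2 - m0.1 ^ 2) / (|D * q2| ^ 2 + |2 * m0.1 * (D * q2) + D * q1| + 1) :=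
        le_trans (min_le_right _ _) (min_le_left _ _)
      calc _ ≤ ((m0.2 - m0.1 ^ 2) / (|D * q2| ^ 2 + |2 * m0.1 * (D * q2) + D * q1| + 1)) *
          (|D * q2| ^ 2 + |2 * m0.1 * (D * q2) + D * q1| + 1) :=
            mul_le_mul_of_nonneg_right h1 (le_of_lt hK2)
        _ = m0.2 - m0.1 ^ 2 := by field_simp
    · have h1 : min 1 (min ((m0.2 - m0.1 ^ 2) / (|D * q2| ^ 2 + |2 * m0.1 * (D * q2) + D * q1| + 1))
        (min ((m0.1 - a1) / (|D * q2| + 1)) ((a2 - m0.1) / (|D * q2| + 1)))) ≤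
          (m0.1 - a1) / (|D * q2| + 1) :=
        le_trans (min_le_right _ _) (le_trans (min_le_right _ _) (min_le_left _ _))
      calc _ ≤ ((m0.1 - a1) / (|D * q2| + 1)) * (|D * q2| + 1) :=
            mul_le_mul_of_nonneg_right h1 (le_of_lt hK1)
        _ = m0.1 - a1 := by field_simp
    · have h1 : min 1 (min ((m0.2 - m0.1 ^ 2) / (|D * q2| ^ 2 + |2 * m0.1 * (D * q2) + D * q1| + 1))
        (min ((m0.1 - a1) / (|D * q2| + 1)) ((a2 - m0.1) / (|D * q2| + 1)))) ≤
          (a2 - m0.1) / (|D * q2| + 1) :=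
        le_trans (min_le_right _ _) (le_trans (min_le_right _ _) (min_le_right _ _))
      calc _ ≤ ((a2 - m0.1) / (|D * q2| + 1)) * (|D * q2| + 1) :=
            mul_le_mul_of_nonneg_right h1 (le_of_lt hK1)
        _ = a2 - m0.1 := by field_simp
  have habs1 : ε * (D * q2) ≤ ε * |D * q2| :=
    mul_le_mul_of_nonneg_left (le_abs_self _) (le_of_lt hε)
  have habs2 : ε * (-|D * q2|) ≤ ε * (D * q2) :=
    mul_le_mul_of_nonneg_left (neg_abs_le _) (le_of_lt hε)
  have habs3 : ε * (-(2 * m0.1 * (D * q2) + D * q1)) ≤ ε * |2 * m0.1 * (D * q2) + D * q1| :=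
    mul_le_mul_of_nonneg_left (by linarith [neg_abs_le (2 * m0.1 * (D * q2) + D * q1)]) (le_of_lt hε)
  have habs5 : ε * ε * (D * q2) ^ 2 ≤ ε * |D * q2| ^ 2 := by
    have h1 : ε * ε ≤ ε := by nlinarith
    have h2 : (D * q2) ^ 2 = |D * q2| ^ 2 := (sq_abs _).symm
    nlinarith [sq_nonneg (D * q2)]
  have hg1 : a1 ≤ m0.1 - ε * (D * q2) := by linarith [habs1, hεa1, hε]
  have hg2 : m0.1 - ε * (D * q2) ≤ a2 := by linarith [habs2, hεa2, hε]
  have hg3 : (m0.1 - ε * (D * q2)) ^ 2 ≤ m0.2 + ε * (D * q1) := by nlinarith [habs3, habs5, hεK2]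
  have hg4 : m0.2 + ε * (D * q1) ≤ (a1 + a2) * (m0.1 - ε * (D * q2)) - a1 * a2 := by
    have h1 : ε * ((q1 + q2 * (a1 + a2)) * D) ≤ 0 :=
      mul_nonpos_of_nonneg_of_nonpos (le_of_lt hε) hQD
    nlinarith [h1, hx4]
  have hm1 := mem_hull_aux a1 a2 (m0.1 - ε * (D * q2)) (m0.2 + ε * (D * q1)) ha hg1 hg2 hg3 hg4
  have hlin1 : q1 * (m0.1 - ε * (D * q2)) + q2 * (m0.2 + ε * (D * q1)) = ξ := by
    rw [← hline]; ring
  have hfinal := hmin (m0.1 - ε * (D * q2), m0.2 + ε * (D * q1)) ⟨hm1, hlin1⟩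
  simp only at hfinal
  have hD2 : 0 < D ^ 2 := by positivity
  have key : ε * (D * (c1 * q2 - c2 * q1)) = ε * D ^ 2 := by rw [hDdef]; ring
  linarith [hfinal, key, mul_pos hε hD2]
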